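/- Let σ₁ = b₁⊗α₁ − 1 and σ₂ = b₂⊗α₂ − 1 be two distinct nontrivial involutions in SL(3,ℝ) (with α₁(b₁) = α₂(b₂) = 2), and let p ≥ 2 be an integer. Then (σ₁σ₂)^p = 1 if and only if both of the following hold: (a) there is an integer q with 1 ≤ q ≤ p/2 such that α₁(b₂)·α₂(b₁) = 4cos²(qπ/p); (b) α₁(b₂) = 0 if and only if α₂(b₁) = 0. -/

import Mathlib

open Matrix Polynomial


section Helpers
variable {n : Type*} [Fintype n]

private lemma vmv_mul_vmv (b α c β : n → ℝ) :
    vecMulVec b α * vecMulVec c β = (∑ k, α k * c k) • vecMulVec b β := by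
  ext i j
  simp only [Matrix.mul_apply, vecMulVec_apply, Matrix.smul_apply, smul_eq_mul,
    Finset.sum_mul]
  exact Finset.sum_congr rfl fun k _ => by ring

private lemma vmv_mulVec (b α v : n → ℝ) :
    vecMulVec b α *ᵥ v = (∑ k, α k * v k) • b := by
  ext i
  simp only [Matrix.mulVec, dotProduct, vecMulVec_apply, Pi.smul_apply, smul_eq_mul,
    Finset.sum_mul]
  exact Finset.sum_congr rfl fun k _ => by ring

private lemma vecMul_vmv (u b α : n → ℝ) :
    u ᵥ* vecMulVec b α = (∑ k, u k * b k) • α := by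
  ext j
  simp only [Matrix.vecMul, dotProduct, vecMulVec_apply, Pi.smul_apply, smul_eq_mul,
    Finset.sum_mul]
  exact Finset.sum_congr rfl fun k _ => by ring

private lemma linsum (α u w : n → ℝ) (a c : ℝ) :
    (∑ k, α k * (a • u + c • w) k) = a * (∑ k, α k * u k) + c * (∑ k, α k * w k) := by
  rw [Finset.mul_sum, Finset.mul_sum, ← Finset.sum_add_distrib]
  exact Finset.sum_congr rfl fun k _ => by simp [Pi.add_apply]; ring

private lemma linsumL (u w v : n → ℝ) (a c : ℝ) :
    (∑ k, (a • u + c • w) k * v k) = a * (∑ k, u k * v k) + c * (∑ k, w k * v k) := by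
  rw [Finset.mul_sum, Finset.mul_sum, ← Finset.sum_add_distrib]
  exact Finset.sum_congr rfl fun k _ => by simp [Pi.add_apply]; ring

private lemma vmv_smul_left (a : ℝ) (b α : n → ℝ) :
    vecMulVec (a • b) α = a • vecMulVec b α := by
  ext i j; simp [vecMulVec_apply]; ring

private lemma vmv_comb_right (b α β : n → ℝ) (a c : ℝ) :
    vecMulVec b (a • α + c • β) = a • vecMulVec b α + c • vecMulVec b β := by
  ext i j; simp [vecMulVec_apply]; ring

private lemma pow_one_add_nilp {m : Type*} [Fintype m] [DecidableEq m]
    (N : Matrix m m ℝ) (hN : N * N = 0) (k : ℕ) :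
    (1 + N) ^ k = 1 + (k : ℝ) • N := by
  induction k with
  | zero => simp
  | succ k ih =>
      rw [pow_succ, ih]
      push_cast
      simp only [add_mul, mul_add, one_mul, mul_one, smul_mul_assoc, hN, smul_zero]
      module

end Helpers

section Core
variable (b₁ α₁ b₂ α₂ : Fin 3 → ℝ)

private lemma Mexp :
    (vecMulVec b₁ α₁ - 1) * (vecMulVec b₂ α₂ - 1)
      = 1 - vecMulVec b₁ α₁ - vecMulVec b₂ α₂
        + (∑ k, α₁ k * b₂ k) • vecMulVec b₁ α₂ := by
  simp only [sub_mul, mul_sub, one_mul, mul_one, vmv_mul_vmv]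
  abel

private lemma invol (h₁ : (∑ k, α₁ k * b₁ k) = 2) :
    (vecMulVec b₁ α₁ - 1) * (vecMulVec b₁ α₁ - 1) = 1 := by
  simp only [sub_mul, mul_sub, one_mul, mul_one, vmv_mul_vmv, h₁]
  module

private lemma Msq (h₁ : (∑ k, α₁ k * b₁ k) = 2) (h₂ : (∑ k, α₂ k * b₂ k) = 2)
    (hx : (∑ k, α₁ k * b₂ k) = 0) (hy : (∑ k, α₂ k * b₁ k) = 0) :
    ((vecMulVec b₁ α₁ - 1) * (vecMulVec b₂ α₂ - 1))
      * ((vecMulVec b₁ α₁ - 1) * (vecMulVec b₂ α₂ - 1)) = 1 := by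
  simp only [sub_mul, mul_sub, one_mul, mul_one, vmv_mul_vmv, h₁, h₂, hx, hy, zero_smul,
    smul_zero, sub_zero, zero_sub, mul_zero, zero_mul, mul_neg, neg_mul, smul_neg, neg_neg,
    Matrix.smul_mul, Matrix.mul_smul, smul_smul, smul_add, smul_sub]
  module

private lemma CH (h₁ : (∑ k, α₁ k * b₁ k) = 2) (h₂ : (∑ k, α₂ k * b₂ k) = 2) :
    ((vecMulVec b₁ α₁ - 1) * (vecMulVec b₂ α₂ - 1) - 1)
      * (((vecMulVec b₁ α₁ - 1) * (vecMulVec b₂ α₂ - 1))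
            * ((vecMulVec b₁ α₁ - 1) * (vecMulVec b₂ α₂ - 1))
          - ((∑ k, α₁ k * b₂ k) * (∑ k, α₂ k * b₁ k) - 2)
              • ((vecMulVec b₁ α₁ - 1) * (vecMulVec b₂ α₂ - 1)) + 1) = 0 := by
  set x := (∑ k, α₁ k * b₂ k) with hx
  set y := (∑ k, α₂ k * b₁ k) with hy
  set P₁ := vecMulVec b₁ α₁ with hP₁
  set P₂ := vecMulVec b₂ α₂ with hP₂
  set Q := vecMulVec b₁ α₂ with hQ
  set R := vecMulVec b₂ α₁ with hR
  have e11 : P₁ * P₁ = (2:ℝ) • P₁ := by rw [hP₁, vmv_mul_vmv, h₁]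
  have e12 : P₁ * P₂ = x • Q := by rw [hP₁, hP₂, vmv_mul_vmv, hx]
  have e1Q : P₁ * Q = (2:ℝ) • Q := by rw [hP₁, hQ, vmv_mul_vmv, h₁]
  have e1R : P₁ * R = x • P₁ := by rw [hP₁, hR, vmv_mul_vmv, hx]
  have e21 : P₂ * P₁ = y • R := by rw [hP₂, hP₁, vmv_mul_vmv, hy]
  have e22 : P₂ * P₂ = (2:ℝ) • P₂ := by rw [hP₂, vmv_mul_vmv, h₂]
  have e2Q : P₂ * Q = y • P₂ := by rw [hP₂, hQ, vmv_mul_vmv, hy]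
  have e2R : P₂ * R = (2:ℝ) • R := by rw [hP₂, hR, vmv_mul_vmv, h₂]
  have eQ1 : Q * P₁ = y • P₁ := by rw [hQ, hP₁, vmv_mul_vmv, hy]
  have eQ2 : Q * P₂ = (2:ℝ) • Q := by rw [hQ, hP₂, vmv_mul_vmv, h₂]
  have eQQ : Q * Q = y • Q := by rw [hQ, vmv_mul_vmv, hy]
  have eQR : Q * R = (2:ℝ) • P₁ := by rw [hQ, hR, vmv_mul_vmv, h₂]
  have eR1 : R * P₁ = (2:ℝ) • R := by rw [hR, hP₁, vmv_mul_vmv, h₁]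
  have eR2 : R * P₂ = x • P₂ := by rw [hR, hP₂, vmv_mul_vmv, hx]
  have eRQ : R * Q = (2:ℝ) • P₂ := by rw [hR, hQ, vmv_mul_vmv, h₁]
  have eRR : R * R = x • R := by rw [hR, vmv_mul_vmv, hx]
  have hM : (P₁ - 1) * (P₂ - 1) = 1 - P₁ - P₂ + x • Q := by
    simp only [sub_mul, mul_sub, one_mul, mul_one, e12]
    abel
  rw [hM]
  simp only [sub_mul, mul_sub, add_mul, mul_add, one_mul, mul_one,
    Matrix.smul_mul, Matrix.mul_smul, smul_smul, smul_add, smul_sub,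
    e11, e12, e1Q, e1R, e21, e22, e2Q, e2R, eQ1, eQ2, eQQ, eQR, eR1, eR2, eRQ, eRR]
  module

end Core


set_option maxHeartbeats 4000000

/-- For two distinct nontrivial involutions `σ₁ = b₁⊗α₁ − 1` and
`σ₂ = b₂⊗α₂ − 1` in `SL(3,ℝ)` (with `α₁(b₁) = α₂(b₂) = 2`) and an integer `p ≥ 2`,
one has `(σ₁σ₂)^p = 1` if and only if `α₁(b₂)·α₂(b₁) = 4cos²(qπ/p)` for some integer
`1 ≤ q ≤ p/2`, and `α₁(b₂)` and `α₂(b₁)` are either both zero or both nonzero. -/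
theorem involutions_product_order
    (b₁ α₁ b₂ α₂ : Fin 3 → ℝ)
    (h₁ : (∑ k, α₁ k * b₁ k) = 2) (h₂ : (∑ k, α₂ k * b₂ k) = 2)
    (σ₁ σ₂ : Matrix (Fin 3) (Fin 3) ℝ)
    (hσ₁ : σ₁ = Matrix.vecMulVec b₁ α₁ - 1) (hσ₂ : σ₂ = Matrix.vecMulVec b₂ α₂ - 1)
    (hne : σ₁ ≠ σ₂) (p : ℕ) (hp : 2 ≤ p) :
    (σ₁ * σ₂) ^ p = 1 ↔
      ((∃ q : ℕ, 1 ≤ q ∧ 2 * q ≤ p ∧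
          (∑ k, α₁ k * b₂ k) * (∑ k, α₂ k * b₁ k) =
            4 * Real.cos ((q : ℝ) * Real.pi / (p : ℝ)) ^ 2) ∧
        ((∑ k, α₁ k * b₂ k) = 0 ↔ (∑ k, α₂ k * b₁ k) = 0)) := by
  subst hσ₁ hσ₂
  have hp1 : 0 < p := by omega
  have hppos : (0:ℝ) < p := by exact_mod_cast hp1
  have hp0 : (p:ℝ) ≠ 0 := ne_of_gt hppos
  have hp2R : (2:ℝ) ≤ p := by exact_mod_cast hp
  set x := (∑ k, α₁ k * b₂ k) with hxd
  set y := (∑ k, α₂ k * b₁ k) with hyd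
  set M := (vecMulVec b₁ α₁ - 1) * (vecMulVec b₂ α₂ - 1) with hMd
  have hσ₁σ₁ := invol b₁ α₁ h₁
  have hM1 : M ≠ 1 := by
    intro h
    apply hne
    have h2 : (vecMulVec b₁ α₁ - 1) * M = (vecMulVec b₁ α₁ - 1) * 1 := by rw [h]
    rw [hMd, ← mul_assoc, hσ₁σ₁, one_mul, mul_one] at h2
    exact h2.symm
  have hσ₁b₁ : (vecMulVec b₁ α₁ - 1) *ᵥ b₁ = b₁ := by
    rw [sub_mulVec, one_mulVec, vmv_mulVec, h₁]; module
  have hσ₁b₂ : (vecMulVec b₁ α₁ - 1) *ᵥ b₂ = x • b₁ + (-1:ℝ) • b₂ := by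
    rw [sub_mulVec, one_mulVec, vmv_mulVec, ← hxd]; module
  have hσ₂b₂ : (vecMulVec b₂ α₂ - 1) *ᵥ b₂ = b₂ := by
    rw [sub_mulVec, one_mulVec, vmv_mulVec, h₂]; module
  have hσ₂b₁ : (vecMulVec b₂ α₂ - 1) *ᵥ b₁ = y • b₂ + (-1:ℝ) • b₁ := by
    rw [sub_mulVec, one_mulVec, vmv_mulVec, ← hyd]; module
  have hMb₁ : M *ᵥ b₁ = (x*y-1) • b₁ + (-y) • b₂ := by
    rw [hMd, ← mulVec_mulVec, hσ₂b₁, mulVec_add, mulVec_smul, mulVec_smul, hσ₁b₂, hσ₁b₁]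
    match_scalars <;> ring
  have hMb₂ : M *ᵥ b₂ = x • b₁ + (-1:ℝ) • b₂ := by
    rw [hMd, ← mulVec_mulVec, hσ₂b₂, hσ₁b₂]
  have hα₁σ₁ : α₁ ᵥ* (vecMulVec b₁ α₁ - 1) = α₁ := by
    rw [vecMul_sub, vecMul_one, vecMul_vmv, h₁]; module
  have hα₂σ₁ : α₂ ᵥ* (vecMulVec b₁ α₁ - 1) = y • α₁ + (-1:ℝ) • α₂ := by
    rw [vecMul_sub, vecMul_one, vecMul_vmv, ← hyd]; module
  have hα₁σ₂ : α₁ ᵥ* (vecMulVec b₂ α₂ - 1) = x • α₂ + (-1:ℝ) • α₁ := by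
    rw [vecMul_sub, vecMul_one, vecMul_vmv, ← hxd]; module
  have hα₂σ₂ : α₂ ᵥ* (vecMulVec b₂ α₂ - 1) = α₂ := by
    rw [vecMul_sub, vecMul_one, vecMul_vmv, h₂]; module
  have hα₁M : α₁ ᵥ* M = (-1:ℝ) • α₁ + x • α₂ := by
    rw [hMd, ← vecMul_vecMul, hα₁σ₁, hα₁σ₂]; module
  have hα₂M : α₂ ᵥ* M = (-y) • α₁ + (x*y-1) • α₂ := by
    rw [hMd, ← vecMul_vecMul, hα₂σ₁, add_vecMul, smul_vecMul, smul_vecMul, hα₁σ₂, hα₂σ₂]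
    match_scalars <;> ring
  constructor
  · intro hL
    by_cases hx0 : x = 0
    · by_cases hy0 : y = 0
      · -- both zero
        have hM2 : M * M = 1 := Msq b₁ α₁ b₂ α₂ h₁ h₂ (by rw [← hxd]; exact hx0)
          (by rw [← hyd]; exact hy0)
        rcases Nat.even_or_odd p with he | ho
        · obtain ⟨k, hk⟩ := he
          have hk1 : 1 ≤ k := by omega
          refine ⟨⟨k, hk1, by omega, ?_⟩, iff_of_true hx0 hy0⟩
          have hang : (k:ℝ) * Real.pi / (p:ℝ) = Real.pi / 2 := by
            rw [hk]; push_cast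
            rw [div_eq_div_iff (by positivity) (by norm_num)]
            ring
          rw [hang, Real.cos_pi_div_two, hx0, hy0]; norm_num
        · exfalso
          obtain ⟨k, hk⟩ := ho
          have hMp : M ^ p = M := by
            rw [hk, pow_succ, pow_mul, pow_two, hM2, one_pow, one_mul]
          exact hM1 (hMp.symm.trans hL)
      · -- x = 0, y ≠ 0 : contradiction
        exfalso
        have hMb₁' : M *ᵥ b₁ = (-1:ℝ) • b₁ + (-y) • b₂ := by
          rw [hMb₁, hx0]; match_scalars <;> ring
        have hMb₂' : M *ᵥ b₂ = (0:ℝ) • b₁ + (-1:ℝ) • b₂ := by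
          rw [hMb₂, hx0]
        have hind : ∀ n : ℕ, M ^ n *ᵥ b₁
            = ((-1:ℝ)^n) • b₁ + ((-1:ℝ)^n * n * y) • b₂ := by
          intro n
          induction n with
          | zero => rw [pow_zero, one_mulVec]; match_scalars <;> norm_num
          | succ n ih =>
              rw [pow_succ', ← mulVec_mulVec, ih, mulVec_add, mulVec_smul, mulVec_smul,
                hMb₁', hMb₂']
              match_scalars <;> push_cast <;> ring
        have heq := hind p
        rw [hL, one_mulVec] at heq
        have hev := congrArg (fun v => ∑ k, α₂ k * v k) heq
        simp only [linsum] at hev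
        rw [← hyd, h₂] at hev
        rcases Nat.even_or_odd p with he | ho
        · rw [he.neg_one_pow] at hev
          have h0 : y * (2*(p:ℝ)) = 0 := by nlinarith [hev]
          rcases mul_eq_zero.1 h0 with h | h
          · exact hy0 h
          · linarith
        · rw [ho.neg_one_pow] at hev
          have h0 : y * (2 + 2*(p:ℝ)) = 0 := by nlinarith [hev]
          rcases mul_eq_zero.1 h0 with h | h
          · exact hy0 h
          · linarith
    · by_cases hy0 : y = 0
      · -- y = 0, x ≠ 0 : contradiction
        exfalso
        have hα₂M' : α₂ ᵥ* M = (0:ℝ) • α₁ + (-1:ℝ) • α₂ := by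
          rw [hα₂M, hy0]; match_scalars <;> ring
        have hα₁M' : α₁ ᵥ* M = (-1:ℝ) • α₁ + x • α₂ := hα₁M
        have hind : ∀ n : ℕ, α₁ ᵥ* (M ^ n)
            = ((-1:ℝ)^n) • α₁ + ((-1:ℝ)^(n+1) * n * x) • α₂ := by
          intro n
          induction n with
          | zero => rw [pow_zero, vecMul_one]; match_scalars <;> norm_num
          | succ n ih =>
              rw [pow_succ, ← vecMul_vecMul, ih, add_vecMul, smul_vecMul, smul_vecMul,
                hα₁M', hα₂M']
              match_scalars <;> push_cast <;> ring
        have heq := hind p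
        rw [hL, vecMul_one] at heq
        have hev := congrArg (fun f => ∑ k, f k * b₂ k) heq
        simp only [linsumL] at hev
        rw [← hxd, h₂] at hev
        rcases Nat.even_or_odd p with he | ho
        · rw [he.neg_one_pow, (Even.add_one he).neg_one_pow] at hev
          have h0 : x * (2*(p:ℝ)) = 0 := by nlinarith [hev]
          rcases mul_eq_zero.1 h0 with h | h
          · exact hx0 h
          · linarith
        · rw [ho.neg_one_pow, (Odd.add_one ho).neg_one_pow] at hev
          have h0 : x * (2 - 2*(p:ℝ)) = 0 := by nlinarith [hev]
          rcases mul_eq_zero.1 h0 with h | h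
          · exact hx0 h
          · linarith
      · -- main forward case
        set B : Matrix (Fin 2) (Fin 2) ℝ := !![x*y-1, x; -y, -1] with hBd
        have hB0 : ∀ w : Fin 2 → ℝ, (B *ᵥ w) 0 = (x*y-1) * w 0 + x * w 1 := by
          intro w; rw [hBd]; simp [Matrix.mulVec, dotProduct, Fin.sum_univ_two]
        have hB1 : ∀ w : Fin 2 → ℝ, (B *ᵥ w) 1 = -y * w 0 + -1 * w 1 := by
          intro w; rw [hBd]; simp [Matrix.mulVec, dotProduct, Fin.sum_univ_two]
        have hstep : ∀ w : Fin 2 → ℝ, M *ᵥ (w 0 • b₁ + w 1 • b₂)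
            = (B *ᵥ w) 0 • b₁ + (B *ᵥ w) 1 • b₂ := by
          intro w
          rw [mulVec_add, mulVec_smul, mulVec_smul, hMb₁, hMb₂, hB0, hB1]
          match_scalars <;> ring
        have hindB : ∀ (n : ℕ) (w : Fin 2 → ℝ), M ^ n *ᵥ (w 0 • b₁ + w 1 • b₂)
            = (B ^ n *ᵥ w) 0 • b₁ + (B ^ n *ᵥ w) 1 • b₂ := by
          intro n
          induction n with
          | zero => intro w; rw [pow_zero, pow_zero, one_mulVec, one_mulVec]
          | succ n ih =>
              intro w
              rw [pow_succ, ← mulVec_mulVec, hstep w, ih (B *ᵥ w), mulVec_mulVec, ← pow_succ]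
        by_cases hxy4 : x*y = 4
        · -- unipotent case : contradiction
          exfalso
          have hN : (B - 1) * (B - 1) = 0 := by
            ext i j
            fin_cases i <;> fin_cases j <;>
              (simp [hBd, Matrix.mul_apply, Fin.sum_univ_two, Matrix.one_apply,
                Matrix.sub_apply];
               first
                | linear_combination (x*y-1)*hxy4
                | linear_combination x*hxy4
                | linear_combination (-y)*hxy4
                | linear_combination -hxy4
                | linear_combination hxy4
                | linear_combination y*hxy4)
          have hBrw : (1 : Matrix (Fin 2) (Fin 2) ℝ) + (B - 1) = B := by abel
          have hBpow : B ^ p = 1 + (p:ℝ) • (B - 1) := by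
            rw [← hBrw, pow_one_add_nilp (B - 1) hN p, hBrw]
          have h01 := hindB p ![(0:ℝ),1]
          rw [hL, one_mulVec] at h01
          simp only [Matrix.cons_val_zero, Matrix.cons_val_one, Matrix.head_cons, zero_smul,
            one_smul, zero_add] at h01
          have hc0 : (B ^ p *ᵥ ![(0:ℝ),1]) 0 = (p:ℝ)*x := by
            rw [hBpow, hBd]
            simp [Matrix.mulVec, dotProduct, Fin.sum_univ_two, Matrix.one_apply,
              Matrix.sub_apply, Matrix.add_apply, Matrix.smul_apply]
          have hc1 : (B ^ p *ᵥ ![(0:ℝ),1]) 1 = 1 - 2*(p:ℝ) := by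
            rw [hBpow, hBd]
            simp [Matrix.mulVec, dotProduct, Fin.sum_univ_two, Matrix.one_apply,
              Matrix.sub_apply, Matrix.add_apply, Matrix.smul_apply]
            ring
          rw [hc0, hc1] at h01
          have hble : ∀ k, x * b₁ k - 2 * b₂ k = 0 := by
            intro k
            have hk := congrFun h01 k
            simp only [Pi.add_apply, Pi.smul_apply, smul_eq_mul] at hk
            have hz : (p:ℝ) * (x * b₁ k - 2 * b₂ k) = 0 := by linear_combination -hk
            exact (mul_eq_zero.1 hz).resolve_left hp0
          have hb12 : b₁ = (2/x) • b₂ := by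
            funext k
            have := hble k
            simp only [Pi.smul_apply, smul_eq_mul]
            field_simp
            linarith [this]
          set K : Matrix (Fin 3) (Fin 3) ℝ := vecMulVec b₂ ((2/x) • α₁ + (-1:ℝ) • α₂)
            with hKd
          have hγ : (∑ k, ((2/x) • α₁ + (-1:ℝ) • α₂) k * b₂ k) = 0 := by
            rw [linsumL, ← hxd, h₂]
            field_simp
            norm_num
          have hKK : K * K = 0 := by
            rw [hKd, vmv_mul_vmv, hγ, zero_smul]
          have hMK : M = 1 + (-K) := by
            rw [hMd, Mexp b₁ α₁ b₂ α₂, ← hxd, hb12, vmv_smul_left, vmv_smul_left,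
              hKd, vmv_comb_right, smul_smul, show x*(2/x) = 2 by field_simp]
            module
          have hNN : (-K) * (-K) = 0 := by rw [neg_mul_neg, hKK]
          have hp1n := pow_one_add_nilp (-K) hNN p
          rw [← hMK, hL] at hp1n
          have hK0 : (p:ℝ) • (-K) = 0 := left_eq_add.1 hp1n
          have hKz : K = 0 := by
            rcases smul_eq_zero.1 hK0 with h | h
            · exact absurd h hp0
            · exact neg_eq_zero.1 h
          apply hM1
          rw [hMK, hKz]
          simp
        · -- xy ≠ 4 : eigenvalue analysis
          have hu := hindB p ![(1:ℝ),0]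
          have hv := hindB p ![(0:ℝ),1]
          rw [hL, one_mulVec] at hu hv
          simp only [Matrix.cons_val_zero, Matrix.cons_val_one, Matrix.head_cons, zero_smul,
            one_smul, zero_add, add_zero] at hu hv
          set u := B ^ p *ᵥ ![(1:ℝ),0] with hud
          set v := B ^ p *ᵥ ![(0:ℝ),1] with hvd
          have e1 := congrArg (fun f => ∑ k, α₁ k * f k) hu
          simp only [linsum] at e1
          rw [h₁, ← hxd] at e1
          have e2 := congrArg (fun f => ∑ k, α₂ k * f k) hu
          simp only [linsum] at e2
          rw [← hyd, h₂] at e2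
          have e3 := congrArg (fun f => ∑ k, α₁ k * f k) hv
          simp only [linsum] at e3
          rw [h₁, ← hxd] at e3
          have e4 := congrArg (fun f => ∑ k, α₂ k * f k) hv
          simp only [linsum] at e4
          rw [← hyd, h₂] at e4
          have h40 : x*y - 4 ≠ 0 := sub_ne_zero.2 hxy4
          have hu1 : u 1 = 0 := by
            have hz : (x*y - 4) * u 1 = 0 := by linear_combination 2 * e2 - y * e1
            exact (mul_eq_zero.1 hz).resolve_left h40
          have hu0 : u 0 = 1 := by
            rw [hu1] at e1
            linarith [e1]
          have hv0 : v 0 = 0 := by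
            have hz : (x*y - 4) * v 0 = 0 := by linear_combination 2 * e3 - x * e4
            exact (mul_eq_zero.1 hz).resolve_left h40
          have hv1 : v 1 = 1 := by
            rw [hv0] at e3
            have hxx : x * (v 1 - 1) = 0 := by linear_combination -e3
            have := (mul_eq_zero.1 hxx).resolve_left hx0
            linarith [this]
          have hcu : ∀ i, u i = (B ^ p) i 0 := by
            intro i; rw [hud]; simp [Matrix.mulVec, dotProduct, Fin.sum_univ_two]
          have hcv : ∀ i, v i = (B ^ p) i 1 := by
            intro i; rw [hvd]; simp [Matrix.mulVec, dotProduct, Fin.sum_univ_two]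
          have g00 : (B ^ p) 0 0 = 1 := by rw [← hcu 0]; exact hu0
          have g10 : (B ^ p) 1 0 = 0 := by rw [← hcu 1]; exact hu1
          have g01 : (B ^ p) 0 1 = 0 := by rw [← hcv 0]; exact hv0
          have g11 : (B ^ p) 1 1 = 1 := by rw [← hcv 1]; exact hv1
          have hBp : B ^ p = 1 := by
            ext i j
            fin_cases i <;> fin_cases j <;>
              simp [g00, g01, g10, g11, Matrix.one_apply]
          have hBcp : ((Complex.ofRealHom.mapMatrix :
              Matrix (Fin 2) (Fin 2) ℝ →+* Matrix (Fin 2) (Fin 2) ℂ) B) ^ p = 1 := by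
            rw [← map_pow, hBp, _root_.map_one]
          set Bc := (Complex.ofRealHom.mapMatrix :
              Matrix (Fin 2) (Fin 2) ℝ →+* Matrix (Fin 2) (Fin 2) ℂ) B with hBcd
          have hBc00 : Bc 0 0 = (x:ℂ)*y - 1 := by
            rw [hBcd, hBd]
            simp [RingHom.mapMatrix_apply, Matrix.map_apply]
          have hBc01 : Bc 0 1 = (x:ℂ) := by
            rw [hBcd, hBd]; simp [RingHom.mapMatrix_apply, Matrix.map_apply]
          have hBc10 : Bc 1 0 = -(y:ℂ) := by
            rw [hBcd, hBd]; simp [RingHom.mapMatrix_apply, Matrix.map_apply]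
          have hBc11 : Bc 1 1 = (-1:ℂ) := by
            rw [hBcd, hBd]; simp [RingHom.mapMatrix_apply, Matrix.map_apply]
          set sq2 : ℂ := (((x:ℂ)*y-2)^2 - 4) ^ (((2:ℕ):ℂ))⁻¹ with hsd
          have hs : sq2^2 = ((x:ℂ)*y-2)^2 - 4 := by
            rw [hsd]; exact Complex.cpow_nat_inv_pow _ two_ne_zero
          set μ : ℂ := (((x:ℂ)*y-2) + sq2)/2 with hμd
          have hquad : μ^2 - ((x:ℂ)*y-2)*μ + 1 = 0 := by
            rw [hμd]; linear_combination hs/4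
          set v2 : Fin 2 → ℂ := ![(x:ℂ), μ - ((x:ℂ)*y - 1)] with hv2d
          have hev : Bc *ᵥ v2 = μ • v2 := by
            funext i
            fin_cases i
            · show (Bc *ᵥ v2) 0 = (μ • v2) 0
              simp only [Matrix.mulVec, dotProduct, Fin.sum_univ_two, hBc00, hBc01,
                Pi.smul_apply, smul_eq_mul, hv2d, Matrix.cons_val_zero, Matrix.cons_val_one,
                Matrix.head_cons]
              ring
            · show (Bc *ᵥ v2) 1 = (μ • v2) 1
              simp only [Matrix.mulVec, dotProduct, Fin.sum_univ_two, hBc10, hBc11,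
                Pi.smul_apply, smul_eq_mul, hv2d, Matrix.cons_val_zero, Matrix.cons_val_one,
                Matrix.head_cons]
              linear_combination -hquad
          have heig : ∀ n : ℕ, Bc ^ n *ᵥ v2 = (μ^n) • v2 := by
            intro n
            induction n with
            | zero => simp
            | succ n ih =>
                rw [pow_succ', ← mulVec_mulVec, ih, mulVec_smul, hev, smul_smul, ← pow_succ]
          have hfin := heig p
          rw [hBcp, one_mulVec] at hfin
          have hx1 := congrFun hfin 0
          simp only [hv2d, Matrix.cons_val_zero, Pi.smul_apply, smul_eq_mul] at hx1
          have hxC : (x:ℂ) ≠ 0 := Complex.ofReal_ne_zero.2 hx0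
          have hμp : μ^p = 1 := by
            have h7 : μ^p * (x:ℂ) = 1 * (x:ℂ) := by rw [one_mul, ← hx1]
            exact mul_right_cancel₀ hxC h7
          have hμ0 : μ ≠ 0 := by
            intro h
            rw [h] at hquad
            norm_num at hquad
          have habs : ‖μ‖ = 1 := by
            have h8 : ‖μ‖^p = 1 := by rw [← norm_pow, hμp]; simp
            rcases lt_trichotomy ‖μ‖ 1 with h | h | h
            · exfalso
              have h9 := pow_lt_one₀ (norm_nonneg μ) h (by omega : p ≠ 0)
              rw [h8] at h9
              exact lt_irrefl 1 h9
            · exact h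
            · exfalso
              have h9 := one_lt_pow₀ h (by omega : p ≠ 0)
              rw [h8] at h9
              exact lt_irrefl 1 h9
          have hconj : μ * (starRingEnd ℂ) μ = 1 := by
            rw [Complex.mul_conj, Complex.normSq_eq_norm_sq, habs]; norm_num
          have hsum2 : μ + (starRingEnd ℂ) μ = ((x:ℂ)*y - 2) := by
            have h9 : μ * (μ + (starRingEnd ℂ) μ) = μ * ((x:ℂ)*y - 2) := by
              linear_combination hquad + hconj
            exact mul_left_cancel₀ hμ0 h9
          have hre : 2 * μ.re = x*y - 2 := by
            have h10 : ((2*μ.re : ℝ):ℂ) = (((x*y - 2 : ℝ)):ℂ) := by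
              rw [← Complex.add_conj, hsum2]; push_cast; ring
            exact_mod_cast h10
          set ψ := Complex.arg μ with hψd
          have hψcos : Real.cos ψ = μ.re := by
            rw [hψd, Complex.cos_arg hμ0, habs, div_one]
          have hμexp : μ = Complex.exp ((ψ:ℂ) * Complex.I) := by
            conv_lhs => rw [← Complex.norm_mul_exp_arg_mul_I μ]
            rw [habs, Complex.ofReal_one, one_mul, ← hψd]
          have hexp1 : Complex.exp ((p:ℂ) * ((ψ:ℂ) * Complex.I)) = 1 := by
            rw [Complex.exp_nat_mul, ← hμexp, hμp]
          obtain ⟨m, hm⟩ := Complex.exp_eq_one_iff.1 hexp1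
          have hpψ : (p:ℝ) * ψ = m * (2*Real.pi) := by
            have h11 : (((p:ℝ)*ψ : ℝ):ℂ) * Complex.I = (((m*(2*Real.pi) : ℝ)):ℂ) * Complex.I := by
              push_cast
              push_cast at hm
              linear_combination hm
            have h12 := mul_right_cancel₀ Complex.I_ne_zero h11
            exact_mod_cast h12
          have hψle : ψ ≤ Real.pi := Complex.arg_le_pi μ
          have hψgt : -Real.pi < ψ := Complex.neg_pi_lt_arg μ
          have hπ := Real.pi_pos
          have hm1 : 2*m ≤ (p:ℤ) := by
            have h13 : (m:ℝ) * (2*Real.pi) ≤ (p:ℝ)*Real.pi := by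
              rw [← hpψ]; nlinarith [hψle, hppos]
            have h14 : 2*(m:ℝ) ≤ (p:ℝ) := by nlinarith
            exact_mod_cast h14
          have hm2 : -(p:ℤ) < 2*m := by
            have h13 : -((p:ℝ)*Real.pi) < (m:ℝ)*(2*Real.pi) := by
              rw [← hpψ]; nlinarith [hψgt, hppos]
            have h14 : -(p:ℝ) < 2*(m:ℝ) := by nlinarith
            exact_mod_cast h14
          have hm0 : m ≠ 0 := by
            intro h
            rw [h] at hpψ
            have hψ0 : ψ = 0 := by
              have h16 : (p:ℝ) * ψ = 0 := by rw [hpψ]; push_cast; ring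
              rcases mul_eq_zero.1 h16 with h' | h'
              · exact absurd h' hp0
              · exact h'
            have hμ1 : μ = 1 := by rw [hμexp, hψ0]; simp
            rw [hμ1] at hquad
            have h15 : (x:ℂ)*y = 4 := by linear_combination -hquad
            exact hxy4 (by exact_mod_cast h15)
          refine ⟨⟨m.natAbs, by omega, by omega, ?_⟩, iff_of_false hx0 hy0⟩
          have hψval : ψ = 2*(m:ℝ)*Real.pi/(p:ℝ) := by
            rw [eq_div_iff hp0]
            linarith [hpψ]
          have hcos2 : Real.cos (2*((m.natAbs:ℝ)*Real.pi/(p:ℝ))) = Real.cos ψ := by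
            rcases Int.natAbs_eq m with h | h
            · have hm' : (0:ℝ) ≤ (m:ℝ) := by exact_mod_cast (by omega : (0:ℤ) ≤ m)
              have hc : ((m.natAbs : ℝ)) = (m:ℝ) := by
                rw [Nat.cast_natAbs, Int.cast_abs]
                exact abs_of_nonneg hm'
              rw [hψval]; congr 1; rw [hc]; ring
            · have hm' : (m:ℝ) ≤ 0 := by exact_mod_cast (by omega : m ≤ (0:ℤ))
              have hc : ((m.natAbs : ℝ)) = -(m:ℝ) := by
                rw [Nat.cast_natAbs, Int.cast_abs]
                exact abs_of_nonpos hm'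
              rw [hψval, ← Real.cos_neg]; congr 1; rw [hc]; ring
          rw [Real.cos_sq, hcos2, hψcos]
          linarith [hre]
  · rintro ⟨⟨q, hq1, hq2, hqc⟩, hiff⟩
    have hq0R : (0:ℝ) < q := by exact_mod_cast hq1
    have h2q : (2*(q:ℝ)) ≤ p := by exact_mod_cast hq2
    by_cases hx0 : x = 0
    · have hy0 : y = 0 := hiff.1 hx0
      have hcos : Real.cos ((q:ℝ) * Real.pi / (p:ℝ)) = 0 := by
        have h4 : 4 * Real.cos ((q:ℝ) * Real.pi / (p:ℝ)) ^ 2 = 0 := by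
          rw [← hqc, hx0, zero_mul]
        have := sq_nonneg (Real.cos ((q:ℝ) * Real.pi / (p:ℝ)))
        nlinarith [h4]
      obtain ⟨k, hk⟩ := Real.cos_eq_zero_iff.1 hcos
      have hπ := Real.pi_pos
      have hθpos : 0 < (q:ℝ) * Real.pi / (p:ℝ) := by positivity
      have hθle : (q:ℝ) * Real.pi / (p:ℝ) ≤ Real.pi / 2 := by
        rw [div_le_div_iff₀ hppos (by norm_num)]
        nlinarith
      have hk0 : k = 0 := by
        have hklb : (0:ℝ) < 2*(k:ℝ)+1 := by
          by_contra hcon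
          push_neg at hcon
          nlinarith [hk ▸ hθpos]
        have hkub : (2*(k:ℝ)+1) ≤ 1 := by
          by_contra hcon
          push_neg at hcon
          nlinarith [hk ▸ hθle]
        have h1 : (0:ℤ) < 2*k+1 := by exact_mod_cast hklb
        have h2' : (2*k+1 : ℤ) ≤ 1 := by exact_mod_cast hkub
        omega
      rw [hk0] at hk
      push_cast at hk
      have hpq : p = 2 * q := by
        have : (p:ℝ) = 2*(q:ℝ) := by
          rw [div_eq_div_iff hp0 (by norm_num : (2:ℝ) ≠ 0)] at hk
          nlinarith [hk]
        exact_mod_cast this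
      have hM2 : M * M = 1 := Msq b₁ α₁ b₂ α₂ h₁ h₂ (by rw [← hxd]; exact hx0)
        (by rw [← hyd]; exact hy0)
      rw [hpq, pow_mul, pow_two, hM2, one_pow]
    · -- main backward case
      have hy0 : y ≠ 0 := fun h => hx0 (hiff.2 h)
      set θ : ℝ := 2*((q:ℝ) * Real.pi / (p:ℝ)) with hθd
      have hπ := Real.pi_pos
      have hτ : x*y - 2 = 2 * Real.cos θ := by
        rw [Real.cos_sq] at hqc
        rw [hθd]; linarith [hqc]
      have hθpos : 0 < θ := by rw [hθd]; positivity
      have hθeq : θ = 2*(q:ℝ)*Real.pi/(p:ℝ) := by rw [hθd]; ring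
      have hθlepi : θ ≤ Real.pi := by
        rw [hθeq, div_le_iff₀ hppos]; nlinarith
      have hθltpi : θ < Real.pi := by
        rcases lt_or_eq_of_le hθlepi with h | h
        · exact h
        · exfalso
          have hcpi : Real.cos θ = -1 := by rw [h, Real.cos_pi]
          have hxy : x*y = 0 := by rw [hcpi] at hτ; linarith
          rcases mul_eq_zero.1 hxy with h' | h'
          · exact hx0 h'
          · exact hy0 h'
      have hsinpos : 0 < Real.sin θ := Real.sin_pos_of_pos_of_lt_pi hθpos hθltpi
      set ω : ℂ := Complex.exp ((θ:ℂ) * Complex.I) with hωd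
      have hωim : ω.im = Real.sin θ := by rw [hωd]; exact Complex.exp_ofReal_mul_I_im θ
      have hωre : ω.re = Real.cos θ := by rw [hωd]; exact Complex.exp_ofReal_mul_I_re θ
      have hω1 : ω ≠ 1 := by
        intro h
        rw [h] at hωim
        simp only [Complex.one_im] at hωim
        linarith
      have hωc : (starRingEnd ℂ) ω ≠ ω := by
        intro h
        have h' := congrArg Complex.im h
        rw [Complex.conj_im, hωim] at h'
        linarith
      have hωc1 : (starRingEnd ℂ) ω ≠ 1 := by
        intro h
        have h' := congrArg Complex.im h
        rw [Complex.conj_im, hωim, Complex.one_im] at h'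
        linarith
      have hωp : ω ^ p = 1 := by
        rw [hωd, ← Complex.exp_nat_mul]
        have hr : (p:ℝ) * θ = (q:ℝ) * (2*Real.pi) := by
          rw [hθd]; field_simp
        have harg : (p:ℂ) * ((θ:ℂ) * Complex.I) = ((q:ℤ):ℂ) * (2*(Real.pi:ℂ)*Complex.I) := by
          rw [show (p:ℂ)*((θ:ℂ)*Complex.I) = (((p:ℝ)*θ : ℝ):ℂ) * Complex.I by push_cast; ring,
            hr]
          push_cast; ring
        rw [harg, Complex.exp_int_mul_two_pi_mul_I]
      have hωcp : (starRingEnd ℂ) ω ^ p = 1 := by rw [← map_pow, hωp, _root_.map_one]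
      have hprod : ω * (starRingEnd ℂ) ω = 1 := by
        rw [Complex.mul_conj, Complex.normSq_eq_norm_sq, hωd, Complex.norm_exp_ofReal_mul_I]
        norm_num
      have hsum : ω + (starRingEnd ℂ) ω = ((x*y - 2 : ℝ) : ℂ) := by
        rw [Complex.add_conj]
        norm_cast
        rw [hωre]; linarith [hτ]
      set d : ℝ[X] := (X - C 1) * (X^2 + (C (-(x*y-2)) * X + C 1)) with hdd
      have hdmonic : d.Monic := by
        apply Polynomial.Monic.mul (Polynomial.monic_X_sub_C 1)
        apply Polynomial.Monic.add_of_left (Polynomial.monic_X_pow 2)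
        refine lt_of_le_of_lt (Polynomial.degree_linear_le) ?_
        rw [Polynomial.degree_X_pow]
        norm_num
      have hmapd : d.map (algebraMap ℝ ℂ)
          = (X - C 1) * ((X - C ω) * (X - C ((starRingEnd ℂ) ω))) := by
        have hC1 : (C ω + C ((starRingEnd ℂ) ω) : ℂ[X]) = C ((x*y-2:ℝ):ℂ) := by
          rw [← C_add, hsum]
        have hC2 : (C ω * C ((starRingEnd ℂ) ω) : ℂ[X]) = 1 := by
          rw [← C_mul, hprod]; exact Polynomial.C_1
        have hfac : (X^2 + (-(C ((x*y-2:ℝ):ℂ)) * X + 1) : ℂ[X])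
            = (X - C ω) * (X - C ((starRingEnd ℂ) ω)) := by
          linear_combination X * hC1 - hC2
        simp only [hdd, Polynomial.map_mul, Polynomial.map_add, Polynomial.map_sub,
          Polynomial.map_pow, Polynomial.map_one, Polynomial.map_X, Polynomial.map_C,
          Polynomial.map_neg, Complex.coe_algebraMap, Complex.ofReal_neg, map_neg, Polynomial.C_1]
        rw [← hfac]
      have hdvdC : Polynomial.map (algebraMap ℝ ℂ) d ∣ (X^p - 1 : ℂ[X]) := by
        rw [hmapd]
        have co1 : IsCoprime (X - C (1:ℂ)) (X - C ω) :=
          Polynomial.isCoprime_X_sub_C_of_isUnit_sub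
            (isUnit_iff_ne_zero.2 (sub_ne_zero.2 (Ne.symm hω1)))
        have co2 : IsCoprime (X - C (1:ℂ)) (X - C ((starRingEnd ℂ) ω)) :=
          Polynomial.isCoprime_X_sub_C_of_isUnit_sub
            (isUnit_iff_ne_zero.2 (sub_ne_zero.2 (Ne.symm hωc1)))
        have co3 : IsCoprime (X - C ω) (X - C ((starRingEnd ℂ) ω)) :=
          Polynomial.isCoprime_X_sub_C_of_isUnit_sub
            (isUnit_iff_ne_zero.2 (sub_ne_zero.2 (Ne.symm hωc)))
        have r1 : (X - C (1:ℂ)) ∣ (X^p - 1) :=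
          Polynomial.dvd_iff_isRoot.2 (by simp [Polynomial.IsRoot])
        have r2 : (X - C ω) ∣ (X^p - 1 : ℂ[X]) :=
          Polynomial.dvd_iff_isRoot.2 (by simp [Polynomial.IsRoot, hωp])
        have r3 : (X - C ((starRingEnd ℂ) ω)) ∣ (X^p - 1 : ℂ[X]) :=
          Polynomial.dvd_iff_isRoot.2 (by simp [Polynomial.IsRoot, hωcp])
        exact (co1.mul_right co2).mul_dvd r1 (co3.mul_dvd r2 r3)
      have hdvd : d ∣ (X^p - 1 : ℝ[X]) := by
        rw [← Polynomial.map_dvd_map' (algebraMap ℝ ℂ)]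
        simpa only [Polynomial.map_sub, Polynomial.map_pow, Polynomial.map_one,
          Polynomial.map_X] using hdvdC
      obtain ⟨g, hg⟩ := hdvd
      have haev := congrArg (Polynomial.aeval M) hg
      rw [map_sub, map_pow, Polynomial.aeval_X, _root_.map_one, _root_.map_mul] at haev
      have hdM : Polynomial.aeval M d = (M - 1) * (M * M - (x*y-2) • M + 1) := by
        simp only [hdd, _root_.map_mul, _root_.map_add, _root_.map_sub, _root_.map_pow,
          _root_.map_one, Polynomial.aeval_X, Polynomial.aeval_C,
          Algebra.algebraMap_eq_smul_one, one_smul]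
        rw [pow_two, neg_smul, neg_mul, smul_mul_assoc, one_mul]
        abel
      have hCH := CH b₁ α₁ b₂ α₂ h₁ h₂
      rw [← hxd, ← hyd, ← hMd] at hCH
      rw [hdM, hCH, zero_mul] at haev
      exact sub_eq_zero.1 haev
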